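/- Let G be a group with left-order ≤. If for all a, b ∈ G with e < a, b there exists n ∈ ℕ with ab < (ba)ⁿ, then for all a, b ∈ G with e < a < b there exists n ∈ ℕ with b < a⁻¹bⁿa. -/
import Mathlib

/-- If a left-order satisfies `∀ 1 < a, b, ∃ n, ab < (ba)ⁿ`, then for all
`1 < a < b` there is `n` with `b < a⁻¹bⁿa`. -/
theorem stmt6 {G : Type*} [Group G] [LinearOrder G]
    (hinv : ∀ a b c : G, a ≤ b → c * a ≤ c * b)
    (hconrad : ∀ a b : G, 1 < a → 1 < b → ∃ n : ℕ, a * b < (b * a) ^ n) :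
    ∀ a b : G, 1 < a → a < b → ∃ n : ℕ, b < a⁻¹ * b ^ n * a := by
  intro a b ha hab
  have h1 : (1 : G) < a⁻¹ * b := by
    rcases lt_or_ge 1 (a⁻¹ * b) with h | h
    · exact h
    · exfalso
      have := hinv (a⁻¹ * b) 1 a h
      simp at this
      exact absurd this (not_le.mpr hab)
  have key : ∀ m : ℕ, (a⁻¹ * b * a) ^ m = a⁻¹ * b ^ m * a := by
    intro m
    induction m with
    | zero => group
    | succ k ih => rw [pow_succ, pow_succ, ih]; group
  obtain ⟨n, hn⟩ := hconrad a (a⁻¹ * b) ha h1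
  refine ⟨n, ?_⟩
  rw [key n] at hn
  simpa using hn
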